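/- Let D ⊂ ℝⁿ be a bounded convex domain with R = max_{p ∈ D} r(p). For every r ∈ [0, R], the set D_r = {p ∈ D : r(p) > r} is convex. -/
import Mathlib


open scoped RealInnerProductSpace
open Metric MeasureTheory

/-- For a point `p` and a unit vector `v`, the length of the connected component of
`(p + ℝ v) ∩ D` containing `p`, computed as the Lebesgue measure of the corresponding
set of parameters `t` (its connected component containing `0`). -/
noncomputable def segLen {n : ℕ} (D : Set (EuclideanSpace ℝ (Fin n)))
    (p v : EuclideanSpace ℝ (Fin n)) : ℝ :=
  (volume (connectedComponentIn {t : ℝ | p + t • v ∈ D} 0)).toReal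

/-- Inaccessibility of `p` in `D`: the infimum (a minimum, by lower semicontinuity)
of `f_p` over the unit sphere. -/
noncomputable def inacc {n : ℕ} (D : Set (EuclideanSpace ℝ (Fin n)))
    (p : EuclideanSpace ℝ (Fin n)) : ℝ :=
  sInf (segLen D p '' sphere (0 : EuclideanSpace ℝ (Fin n)) 1)

/-- The inaccessibility `R` of `D`: the supremum (for convex `D`, the maximum) of the
inaccessibility function on `D`. -/
noncomputable def Rmax {n : ℕ} (D : Set (EuclideanSpace ℝ (Fin n))) : ℝ :=
  sSup (inacc D '' D)

lemma segLen_nonneg {n : ℕ} (D : Set (EuclideanSpace ℝ (Fin n)))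
    (p v : EuclideanSpace ℝ (Fin n)) : 0 ≤ segLen D p v := ENNReal.toReal_nonneg

/-- Key concavity lemma: `segLen D · v` is concave on `D`. -/
lemma segLen_concave {n : ℕ} {D : Set (EuclideanSpace ℝ (Fin n))}
    (hBdd : Bornology.IsBounded D) (hConv : Convex ℝ D)
    {x y v : EuclideanSpace ℝ (Fin n)} (hx : x ∈ D) (hy : y ∈ D) (hv : ‖v‖ = 1)
    {a b : ℝ} (ha : 0 < a) (hb : 0 < b) (hab : a + b = 1) :
    a * segLen D x v + b * segLen D y v ≤ segLen D (a • x + b • y) v := by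
  obtain ⟨M, hM⟩ := hBdd.subset_closedBall 0
  set z := a • x + b • y with hzdef
  have hzD : z ∈ D := hConv hx hy ha.le hb.le hab
  set S : EuclideanSpace ℝ (Fin n) → Set ℝ := fun p => {t | p + t • v ∈ D} with hS
  have h0 : ∀ p ∈ D, (0 : ℝ) ∈ S p := by
    intro p hp
    simp [hS, hp]
  have hconvS : ∀ p, Convex ℝ (S p) := by
    intro p t₁ h₁ t₂ h₂ c d hc hd hcd
    have key : p + (c * t₁ + d * t₂) • v = c • (p + t₁ • v) + d • (p + t₂ • v) := by
      have : c • (p + t₁ • v) + d • (p + t₂ • v)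
          = (c + d) • p + (c * t₁ + d * t₂) • v := by module
      rw [this, hcd, one_smul]
    show p + (c • t₁ + d • t₂) • v ∈ D
    simp only [smul_eq_mul]
    rw [key]
    exact hConv h₁ h₂ hc hd hcd
  have hbddS : ∀ p ∈ D, S p ⊆ Set.Icc (-(2 * M)) (2 * M) := by
    intro p hp t ht
    have h1 : ‖p + t • v‖ ≤ M := by
      have := hM ht
      rwa [mem_closedBall_zero_iff] at this
    have h2 : ‖p‖ ≤ M := by
      have := hM hp
      rwa [mem_closedBall_zero_iff] at this
    have h3 : |t| ≤ 2 * M := by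
      have : |t| = ‖t • v‖ := by rw [norm_smul, hv, Real.norm_eq_abs, mul_one]
      rw [this]
      have : t • v = (p + t • v) - p := by abel
      rw [this]
      calc ‖(p + t • v) - p‖ ≤ ‖p + t • v‖ + ‖p‖ := norm_sub_le _ _
        _ ≤ 2 * M := by linarith
    exact abs_le.mp h3 |> fun h => ⟨h.1, h.2⟩
  have hBb : ∀ p ∈ D, BddBelow (S p) := fun p hp =>
    ⟨-(2 * M), fun t ht => (hbddS p hp ht).1⟩
  have hBa : ∀ p ∈ D, BddAbove (S p) := fun p hp =>
    ⟨2 * M, fun t ht => (hbddS p hp ht).2⟩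
  have hfin : ∀ p ∈ D, volume (S p) ≠ ⊤ := by
    intro p hp
    exact ((measure_mono (hbddS p hp)).trans_lt measure_Icc_lt_top).ne
  -- the three segments
  set ix := sInf (S x); set sx := sSup (S x)
  set iy := sInf (S y); set sy := sSup (S y)
  have hix0 : ix ≤ 0 := csInf_le (hBb x hx) (h0 x hx)
  have hsx0 : (0:ℝ) ≤ sx := le_csSup (hBa x hx) (h0 x hx)
  have hiy0 : iy ≤ 0 := csInf_le (hBb y hy) (h0 y hy)
  have hsy0 : (0:ℝ) ≤ sy := le_csSup (hBa y hy) (h0 y hy)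
  have hsubIcc : ∀ p ∈ D, S p ⊆ Set.Icc (sInf (S p)) (sSup (S p)) := by
    intro p hp t ht
    exact ⟨csInf_le (hBb p hp) ht, le_csSup (hBa p hp) ht⟩
  -- upper bound for segLen on x and y
  have hupper : ∀ p ∈ D, segLen D p v ≤ sSup (S p) - sInf (S p) := by
    intro p hp
    have hcc : connectedComponentIn (S p) 0 ⊆ Set.Icc (sInf (S p)) (sSup (S p)) :=
      (connectedComponentIn_subset _ _).trans (hsubIcc p hp)
    have h1 : volume (connectedComponentIn (S p) 0)
        ≤ ENNReal.ofReal (sSup (S p) - sInf (S p)) := by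
      calc volume (connectedComponentIn (S p) 0)
          ≤ volume (Set.Icc (sInf (S p)) (sSup (S p))) := measure_mono hcc
        _ = ENNReal.ofReal (sSup (S p) - sInf (S p)) := Real.volume_Icc
    have hnn : 0 ≤ sSup (S p) - sInf (S p) := by
      have h1' : sInf (S p) ≤ 0 := csInf_le (hBb p hp) (h0 p hp)
      have h2' : (0:ℝ) ≤ sSup (S p) := le_csSup (hBa p hp) (h0 p hp)
      linarith
    calc segLen D p v ≤ (ENNReal.ofReal (sSup (S p) - sInf (S p))).toReal :=
          ENNReal.toReal_mono ENNReal.ofReal_ne_top h1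
      _ = sSup (S p) - sInf (S p) := ENNReal.toReal_ofReal hnn
  -- membership in S z from combinations
  have hmem : ∀ s t : ℝ, s ∈ S x → t ∈ S y → a * s + b * t ∈ S z := by
    intro s t hs ht
    show z + (a * s + b * t) • v ∈ D
    have key : z + (a * s + b * t) • v = a • (x + s • v) + b • (y + t • v) := by
      rw [hzdef]; module
    rw [key]
    exact hConv hs ht ha.le hb.le hab
  -- segLen at z equals volume of S z
  have hSz : segLen D z v = (volume (S z)).toReal := by
    unfold segLen
    rw [((hconvS z).isPreconnected).connectedComponentIn (h0 z hzD)]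
  -- lower bound: segLen z ≥ (a*sx+b*sy) - (a*ix+b*iy)
  have hlower : (a * sx + b * sy) - (a * ix + b * iy) ≤ segLen D z v := by
    refine le_of_forall_pos_le_add ?_
    intro ε hε
    by_cases hcase : (a * sx + b * sy) - (a * ix + b * iy) ≤ ε
    · have := segLen_nonneg D z v
      linarith
    push_neg at hcase
    -- pick approximating points
    obtain ⟨s, hs, hs'⟩ : ∃ s ∈ S x, sx - ε/4 < s := by
      obtain ⟨s, hsmem, hslt⟩ := exists_lt_of_lt_csSup ⟨0, h0 x hx⟩
        (show sx - ε/4 < sx by linarith)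
      exact ⟨s, hsmem, hslt⟩
    obtain ⟨t, ht, ht'⟩ : ∃ t ∈ S y, sy - ε/4 < t := by
      obtain ⟨t, htmem, htlt⟩ := exists_lt_of_lt_csSup ⟨0, h0 y hy⟩
        (show sy - ε/4 < sy by linarith)
      exact ⟨t, htmem, htlt⟩
    obtain ⟨s', hs'mem, hs''⟩ : ∃ s' ∈ S x, s' < ix + ε/4 := by
      obtain ⟨s', hsmem, hslt⟩ := exists_lt_of_csInf_lt ⟨0, h0 x hx⟩
        (show ix < ix + ε/4 by linarith)
      exact ⟨s', hsmem, hslt⟩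
    obtain ⟨t', ht'mem, ht''⟩ : ∃ t' ∈ S y, t' < iy + ε/4 := by
      obtain ⟨t', htmem, htlt⟩ := exists_lt_of_csInf_lt ⟨0, h0 y hy⟩
        (show iy < iy + ε/4 by linarith)
      exact ⟨t', htmem, htlt⟩
    have hm1 : a * s' + b * t' ∈ S z := hmem s' t' hs'mem ht'mem
    have hm2 : a * s + b * t ∈ S z := hmem s t hs ht
    have hIcc : Set.Icc (a * s' + b * t') (a * s + b * t) ⊆ S z :=
      fun u hu => (hconvS z).ordConnected.out hm1 hm2 hu
    have hvol : ENNReal.ofReal ((a * s + b * t) - (a * s' + b * t')) ≤ volume (S z) := by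
      calc ENNReal.ofReal ((a * s + b * t) - (a * s' + b * t'))
          = volume (Set.Icc (a * s' + b * t') (a * s + b * t)) := Real.volume_Icc.symm
        _ ≤ volume (S z) := measure_mono hIcc
    have hdiff : (a * sx + b * sy) - (a * ix + b * iy) - ε/2 ≤ (a * s + b * t) - (a * s' + b * t') := by
      nlinarith
    have hdiffpos : 0 ≤ (a * s + b * t) - (a * s' + b * t') := by linarith
    have : (a * s + b * t) - (a * s' + b * t') ≤ segLen D z v := by
      rw [hSz]
      calc (a * s + b * t) - (a * s' + b * t')
          = (ENNReal.ofReal ((a * s + b * t) - (a * s' + b * t'))).toReal :=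
            (ENNReal.toReal_ofReal hdiffpos).symm
        _ ≤ (volume (S z)).toReal := ENNReal.toReal_mono (hfin z hzD) hvol
    linarith
  have hux := hupper x hx
  have huy := hupper y hy
  nlinarith [segLen_nonneg D x v, segLen_nonneg D y v]

/-- for a bounded convex domain `D ⊂ ℝⁿ` with `R = max r`, the set
`D_r = {p ∈ D | r(p) > r}` is convex for every `r ∈ [0, R]`. -/
theorem Dset_convex {n : ℕ} (D : Set (EuclideanSpace ℝ (Fin n)))
    (hOpen : IsOpen D) (hNe : D.Nonempty) (hBdd : Bornology.IsBounded D)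
    (hConv : Convex ℝ D) :
    ∀ r ∈ Set.Icc (0 : ℝ) (Rmax D), Convex ℝ {p | p ∈ D ∧ r < inacc D p} := by
  intro r hr x hx y hy a b ha hb hab
  obtain ⟨hxD, hxr⟩ := hx
  obtain ⟨hyD, hyr⟩ := hy
  rcases ha.eq_or_lt with rfl | ha'
  · rw [zero_add] at hab; subst hab
    simpa using ⟨hyD, hyr⟩
  rcases hb.eq_or_lt with rfl | hb'
  · rw [add_zero] at hab; subst hab
    simpa using ⟨hxD, hxr⟩
  have hzD : a • x + b • y ∈ D := hConv hxD hyD ha hb hab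
  refine ⟨hzD, ?_⟩
  rcases Set.eq_empty_or_nonempty (sphere (0 : EuclideanSpace ℝ (Fin n)) 1) with hemp | hne
  · exfalso
    have : inacc D x = 0 := by
      unfold inacc
      rw [hemp, Set.image_empty, Real.sInf_empty]
    rw [this] at hxr
    exact absurd hr.1 (not_le.mpr hxr)
  have hbdd0 : ∀ p : EuclideanSpace ℝ (Fin n),
      BddBelow (segLen D p '' sphere (0 : EuclideanSpace ℝ (Fin n)) 1) :=
    fun p => ⟨0, fun w ⟨v, _, hw⟩ => hw ▸ segLen_nonneg D p v⟩
  have hinacc_le : ∀ (p : EuclideanSpace ℝ (Fin n)) (v), v ∈ sphere (0 : EuclideanSpace ℝ (Fin n)) 1 →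
      inacc D p ≤ segLen D p v := fun p v hv =>
    csInf_le (hbdd0 p) ⟨v, hv, rfl⟩
  unfold inacc
  have hbound : a * inacc D x + b * inacc D y
      ≤ sInf (segLen D (a • x + b • y) '' sphere (0 : EuclideanSpace ℝ (Fin n)) 1) := by
    refine le_csInf (hne.image _) ?_
    rintro w ⟨v, hv, rfl⟩
    have hv1 : ‖v‖ = 1 := by simpa using mem_sphere_zero_iff_norm.mp hv
    have hkey := segLen_concave hBdd hConv hxD hyD hv1 ha' hb' hab
    have h1 : inacc D x ≤ segLen D x v := hinacc_le x v hv
    have h2 : inacc D y ≤ segLen D y v := hinacc_le y v hv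
    nlinarith
  have hr' : a * r + b * r = r := by rw [← add_mul, hab, one_mul]
  have h1 := mul_lt_mul_of_pos_left hxr ha'
  have h2 := mul_lt_mul_of_pos_left hyr hb'
  linarith
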